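/- Every Gallai clique (complete edge-colored graph with no colorful triangle) on at least one vertex has a spanning monochrome, i.e., there is a color α such that the graph consisting of all edges of color α has a connected component containing every vertex. -/

import Mathlib

/-- Every Gallai clique on at least one vertex has a spanning monochrome:
there is a color α such that the graph of α-colored edges is connected. -/
theorem gallai_spanning_monochrome {V Γ : Type*} [Fintype V] [Nonempty V]
    (col : V → V → Γ) (hsymm : ∀ u v, col u v = col v u)
    (gallai : ∀ u v w : V, u ≠ v → v ≠ w → u ≠ w →
        col u v = col v w ∨ col v w = col u w ∨ col u v = col u w) :
    ∃ α : Γ, (SimpleGraph.fromRel fun u v => col u v = α).Connected := by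
  classical
  have key : ∀ s : Finset V, s.Nonempty → ∃ α : Γ, ∀ u ∈ s, ∀ w ∈ s,
      Relation.ReflTransGen (fun a b => a ∈ s ∧ b ∈ s ∧ a ≠ b ∧ col a b = α) u w := by
    intro s
    induction s using Finset.strongInduction with
    | _ s ih =>
      intro hs
      obtain ⟨v, hv⟩ := hs
      have Rsymm : ∀ α : Γ, Symmetric (fun a b => a ∈ s ∧ b ∈ s ∧ a ≠ b ∧ col a b = α) := by
        intro α a b ⟨h1, h2, h3, h4⟩
        exact ⟨h2, h1, h3.symm, (hsymm b a).trans h4⟩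
      by_cases ht : (s.erase v).Nonempty
      · set t := s.erase v with htdef
        obtain ⟨α, hα⟩ := ih t (Finset.erase_ssubset hv) ht
        have tsub : t ⊆ s := Finset.erase_subset _ _
        have hmono : ∀ a b, Relation.ReflTransGen
            (fun a b => a ∈ t ∧ b ∈ t ∧ a ≠ b ∧ col a b = α) a b →
            Relation.ReflTransGen (fun a b => a ∈ s ∧ b ∈ s ∧ a ≠ b ∧ col a b = α) a b := by
          intro a b h
          exact Relation.ReflTransGen.mono
            (fun x y (⟨h1, h2, h3, h4⟩ : x ∈ t ∧ y ∈ t ∧ x ≠ y ∧ col x y = α) => ⟨tsub h1, tsub h2, h3, h4⟩) a b h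
        by_cases hc : ∃ u ∈ t, col v u = α
        · obtain ⟨u0, hu0, hcu0⟩ := hc
          refine ⟨α, ?_⟩
          have step : ∀ a ∈ s, Relation.ReflTransGen
              (fun a b => a ∈ s ∧ b ∈ s ∧ a ≠ b ∧ col a b = α) a u0 := by
            intro a ha
            by_cases hav : a = v
            · subst hav
              exact Relation.ReflTransGen.single
                ⟨ha, tsub hu0, (Finset.ne_of_mem_erase hu0).symm, hcu0⟩
            · exact hmono _ _ (hα a (Finset.mem_erase.mpr ⟨hav, ha⟩) u0 hu0)
          intro u hu w hw
          exact (step u hu).trans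
            ((@Relation.ReflTransGen.stdSymm _ _ ⟨fun a b h => Rsymm α h⟩).symm _ _ (step w hw))
        · push_neg at hc
          obtain ⟨u0, hu0⟩ := ht
          set β := col v u0 with hβ
          have claim : ∀ u ∈ t, col v u = β := by
            intro u hu
            have hpath := hα u0 hu0 u hu
            clear hu
            induction hpath with
            | refl => rfl
            | tail hp hstep ih2 =>
              obtain ⟨hb, hcmem, hbc, hcol⟩ := hstep
              have hvb : v ≠ _ := (Finset.ne_of_mem_erase hb).symm
              have hvc : v ≠ _ := (Finset.ne_of_mem_erase hcmem).symm
              rcases gallai v _ _ hvb hbc hvc with h | h | h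
              · exact absurd (h.trans hcol) (hc _ hb)
              · exact absurd (hcol.symm.trans h).symm (hc _ hcmem)
              · exact h.symm.trans ih2
          refine ⟨β, ?_⟩
          have step : ∀ a ∈ s, Relation.ReflTransGen
              (fun a b => a ∈ s ∧ b ∈ s ∧ a ≠ b ∧ col a b = β) v a := by
            intro a ha
            by_cases hav : a = v
            · subst hav; exact Relation.ReflTransGen.refl
            · have hat : a ∈ t := Finset.mem_erase.mpr ⟨hav, ha⟩
              exact Relation.ReflTransGen.single
                ⟨hv, ha, fun h => hav h.symm, claim a hat⟩
          intro u hu w hw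
          exact ((@Relation.ReflTransGen.stdSymm _ _ ⟨fun a b h => Rsymm β h⟩).symm _ _ (step u hu)).trans
            (step w hw)
      · -- s = {v}
        refine ⟨col v v, ?_⟩
        intro u hu w hw
        have hsv : ∀ x ∈ s, x = v := by
          intro x hx
          by_contra hxv
          exact ht ⟨x, Finset.mem_erase.mpr ⟨hxv, hx⟩⟩
        rw [hsv u hu, hsv w hw]
  obtain ⟨α, hα⟩ := key Finset.univ Finset.univ_nonempty
  refine ⟨α, ?_⟩
  rw [SimpleGraph.connected_iff]
  refine ⟨?_, inferInstance⟩
  intro u w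
  have h := hα u (Finset.mem_univ u) w (Finset.mem_univ w)
  induction h with
  | refl => exact SimpleGraph.Reachable.refl _
  | tail hp hstep ih2 =>
    obtain ⟨_, _, hne, hcol⟩ := hstep
    exact ih2.trans (SimpleGraph.Adj.reachable
      ((SimpleGraph.fromRel_adj _ _ _).mpr ⟨hne, Or.inl hcol⟩))
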